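/- Let ν be a Borel probability measure on ℝ^d with continuous positive density, and let B and B′ be d-dimensional simplicial cones with vertex at the origin such that max(ν(B), ν(B′)) ≤ 1/(d+1) + 1/(3(d+1)³) and ν(B ∩ B′) ≥ 1/(d+1) − (3d+2)/(3(d+1)³). Then B ⊇ C(B′) and B′ ⊇ C(B), where C(B) = ⋂{H ∩ B : H half-space, 0 ∈ ∂H, ν(H ∩ B) ≥ (d/(d+1))·ν(B)} is the central cone of B. -/

import Mathlib

open MeasureTheory

/-- The central cone `C(B; ν)` of a cone `B`: the set of points of `B` lying in every
closed half-space `H` through the origin with `ν(H ∩ B) ≥ (d/(d+1))·ν(B)`. -/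
def centralCone (d : ℕ) (ν : Measure (EuclideanSpace ℝ (Fin d)))
    (B : Set (EuclideanSpace ℝ (Fin d))) : Set (EuclideanSpace ℝ (Fin d)) :=
  {x ∈ B | ∀ m : EuclideanSpace ℝ (Fin d), m ≠ 0 →
    (d / (d + 1) : ℝ) * (ν B).toReal ≤
      (ν ({y : EuclideanSpace ℝ (Fin d) | (inner ℝ m y : ℝ) ≤ 0} ∩ B)).toReal →
    (inner ℝ m x : ℝ) ≤ 0}

/-- `B` is a d-dimensional simplicial cone with vertex at the origin. -/
def IsSimplicialCone (d : ℕ) (B : Set (EuclideanSpace ℝ (Fin d))) : Prop :=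
  ∃ v : Fin d → EuclideanSpace ℝ (Fin d), LinearIndependent ℝ v ∧
    B = {x | ∃ c : Fin d → ℝ, (∀ i, 0 ≤ c i) ∧ x = ∑ i, c i • v i}

/-- Separation for a point outside a simplicial cone. -/
lemma cone_sep {d : ℕ} {B : Set (EuclideanSpace ℝ (Fin d))} (hB : IsSimplicialCone d B)
    {x : EuclideanSpace ℝ (Fin d)} (hx : x ∉ B) :
    ∃ m : EuclideanSpace ℝ (Fin d), m ≠ 0 ∧ (∀ y ∈ B, (inner ℝ m y : ℝ) ≤ 0) ∧
      0 < (inner ℝ m x : ℝ) := by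
  obtain ⟨v, hv, rfl⟩ := hB
  rcases Nat.eq_zero_or_pos d with hd | hd
  · exfalso
    apply hx
    refine ⟨0, fun i => le_refl 0, ?_⟩
    subst hd
    exact Subsingleton.elim _ _
  · haveI : NeZero d := ⟨hd.ne'⟩
    have hcard : Fintype.card (Fin d) = Module.finrank ℝ (EuclideanSpace ℝ (Fin d)) := by
      simp [finrank_euclideanSpace]
    let b := basisOfLinearIndependentOfCardEqFinrank hv hcard
    have hb : ⇑b = v := coe_basisOfLinearIndependentOfCardEqFinrank hv hcard
    have hj : ∃ j, b.repr x j < 0 := by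
      by_contra h
      push_neg at h
      exact hx ⟨fun i => b.repr x i, h, by rw [← hb]; exact (b.sum_repr x).symm⟩
    obtain ⟨j, hj⟩ := hj
    set φ : EuclideanSpace ℝ (Fin d) →L[ℝ] ℝ :=
      LinearMap.toContinuousLinearMap (-(b.coord j)) with hφ
    have key : ∀ y, (inner ℝ ((InnerProductSpace.toDual ℝ _).symm φ) y : ℝ) = -(b.repr y j) := by
      intro y
      rw [InnerProductSpace.toDual_symm_apply]
      simp [hφ, Module.Basis.coord_apply]
    refine ⟨(InnerProductSpace.toDual ℝ _).symm φ, ?_, ?_, ?_⟩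
    · intro h
      have h2 := key (b j)
      rw [h] at h2
      simp at h2
    · rintro y ⟨c, hc, rfl⟩
      rw [key]
      have : b.repr (∑ i, c i • v i) j = c j := by
        rw [← hb, b.repr_sum_self]
      rw [this]
      linarith [hc j]
    · rw [key]; linarith

/-- The key numerical inequality. -/
lemma key_ineq (n : ℝ) (hn : 0 ≤ n) :
    (n/(n+1)) * (1/(n+1)+1/(3*(n+1)^3)) ≤ 1/(n+1) - (3*n+2)/(3*(n+1)^3) := by
  have h1 : (0:ℝ) < n + 1 := by linarith
  rw [← sub_nonneg]
  have heq : 1/(n+1) - (3*n+2)/(3*(n+1)^3) - (n/(n+1)) * (1/(n+1)+1/(3*(n+1)^3))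
      = 1/(3*(n+1)^4) := by
    field_simp
    ring
  rw [heq]
  positivity

/-- One side of the containment. -/
lemma central_subset (d : ℕ) (ν : Measure (EuclideanSpace ℝ (Fin d)))
    [IsProbabilityMeasure ν]
    (B B' : Set (EuclideanSpace ℝ (Fin d))) (hB : IsSimplicialCone d B)
    (hmax' : (ν B').toReal ≤ 1 / (d + 1) + 1 / (3 * (d + 1) ^ 3))
    (hcap : (ν (B ∩ B')).toReal ≥ 1 / (d + 1) - (3 * d + 2) / (3 * (d + 1) ^ 3)) :
    centralCone d ν B' ⊆ B := by
  intro x hx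
  obtain ⟨hxB', hxc⟩ := hx
  by_contra hxB
  obtain ⟨m, hm0, hmB, hmx⟩ := cone_sep hB hxB
  have hmono : (ν (B ∩ B')).toReal ≤
      (ν ({y : EuclideanSpace ℝ (Fin d) | (inner ℝ m y : ℝ) ≤ 0} ∩ B')).toReal := by
    apply ENNReal.toReal_mono (measure_ne_top ν _)
    apply measure_mono
    exact Set.inter_subset_inter_left _ (fun y hy => hmB y hy)
  have hd0 : (0:ℝ) ≤ (d : ℝ) := Nat.cast_nonneg d
  have hdd : (0:ℝ) ≤ (d : ℝ) / ((d : ℝ) + 1) := by positivity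
  have hnum : ((d:ℝ) / (d + 1)) * (ν B').toReal ≤
      (ν ({y : EuclideanSpace ℝ (Fin d) | (inner ℝ m y : ℝ) ≤ 0} ∩ B')).toReal := by
    calc ((d:ℝ) / (d + 1)) * (ν B').toReal
        ≤ ((d:ℝ) / (d + 1)) * (1 / (d + 1) + 1 / (3 * (d + 1) ^ 3)) :=
          mul_le_mul_of_nonneg_left hmax' hdd
      _ ≤ 1 / (d + 1) - (3 * d + 2) / (3 * (d + 1) ^ 3) := key_ineq (d : ℝ) hd0
      _ ≤ (ν (B ∩ B')).toReal := hcap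
      _ ≤ _ := hmono
  have := hxc m hm0 hnum
  linarith

theorem stmt11 (d : ℕ) (ν : Measure (EuclideanSpace ℝ (Fin d))) [IsProbabilityMeasure ν]
    (f : EuclideanSpace ℝ (Fin d) → ℝ)
    (hf : Continuous f) (hfpos : ∀ x, 0 < f x)
    (hν : ν = volume.withDensity (fun x => ENNReal.ofReal (f x)))
    (B B' : Set (EuclideanSpace ℝ (Fin d)))
    (hB : IsSimplicialCone d B) (hB' : IsSimplicialCone d B')
    (hmax : max (ν B).toReal (ν B').toReal ≤ 1 / (d + 1) + 1 / (3 * (d + 1) ^ 3))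
    (hcap : (ν (B ∩ B')).toReal ≥ 1 / (d + 1) - (3 * d + 2) / (3 * (d + 1) ^ 3)) :
    centralCone d ν B' ⊆ B ∧ centralCone d ν B ⊆ B' := by
  have hmaxB : (ν B).toReal ≤ 1 / (d + 1) + 1 / (3 * (d + 1) ^ 3) :=
    le_trans (le_max_left _ _) hmax
  have hmaxB' : (ν B').toReal ≤ 1 / (d + 1) + 1 / (3 * (d + 1) ^ 3) :=
    le_trans (le_max_right _ _) hmax
  have hcap' : (ν (B' ∩ B)).toReal ≥ 1 / (d + 1) - (3 * d + 2) / (3 * (d + 1) ^ 3) := by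
    rwa [Set.inter_comm]
  exact ⟨central_subset d ν B B' hB hmaxB' hcap,
    central_subset d ν B' B hB' hmaxB hcap'⟩
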